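/- Let m ≥ 2 be an even integer and n ≥ 1. Let g, h ∈ ℝ with h ≠ 0 and g/h not an integer, and let A be the Cauchy–Hankel tensor of order m and dimension n determined by g and h. Then A is positive definite if and only if g + m·h > 0 and g + n·m·h > 0. -/

import Mathlib

open Finset

/-- `A x^m = ∑_{i_1,…,i_m} a_{i_1⋯i_m} x_{i_1}⋯x_{i_m}` for an order `m` dimension `n` tensor. -/
noncomputable def tApply (m n : ℕ) (a : (Fin m → Fin n) → ℝ) (x : Fin n → ℝ) : ℝ :=
  ∑ i : Fin m → Fin n, a i * ∏ j, x (i j)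

/-- An (even order) tensor is positive semi-definite if `A x^m ≥ 0` for all `x`. -/
def IsPSD (m n : ℕ) (a : (Fin m → Fin n) → ℝ) : Prop :=
  ∀ x : Fin n → ℝ, 0 ≤ tApply m n a x

/-- An (even order) tensor is positive definite if `A x^m > 0` for all nonzero `x`. -/
def IsPD (m n : ℕ) (a : (Fin m → Fin n) → ℝ) : Prop :=
  ∀ x : Fin n → ℝ, x ≠ 0 → 0 < tApply m n a x

/-- The Cauchy–Hankel tensor determined by `g, h`: entries
`1 / (g + h(i_1 + ⋯ + i_m))` for 1-based indices `i_j ∈ [n]`. -/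
noncomputable def cauchyHankel (m n : ℕ) (g h : ℝ) : (Fin m → Fin n) → ℝ :=
  fun i => 1 / (g + h * ∑ j, (((i j : ℕ) : ℝ) + 1))

/-- Theorem 5.1: an even order Cauchy–Hankel tensor is positive definite iff
`g + mh > 0` and `g + nmh > 0`. -/
theorem stmt_15 (m n : ℕ) (hm : 2 ≤ m) (hme : Even m) (hn : 1 ≤ n)
    (g h : ℝ) (hh : h ≠ 0) (hgh : ∀ z : ℤ, g / h ≠ (z : ℝ)) :
    IsPD m n (cauchyHankel m n g h)
      ↔ 0 < g + (m : ℝ) * h ∧ 0 < g + (n : ℝ) * (m : ℝ) * h := by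
  have hm0 : 0 < m := by omega
  have hmR : (0:ℝ) < (m:ℝ) := by exact_mod_cast hm0
  haveI : Nonempty (Fin m) := ⟨⟨0, hm0⟩⟩
  constructor
  · -- PD → inequalities
    intro hpd
    have key : ∀ k : Fin n, 0 < g + h * ((m:ℝ) * (((k:ℕ):ℝ) + 1)) := by
      intro k
      have hx : (Pi.single k (1:ℝ) : Fin n → ℝ) ≠ 0 := by
        intro h0
        have := congrFun h0 k
        simp at this
      have hprod : ∀ i : Fin m → Fin n,
          (∏ j, (Pi.single k (1:ℝ) : Fin n → ℝ) (i j)) = if i = fun _ => k then 1 else 0 := by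
        intro i
        by_cases hi : i = fun _ => k
        · subst hi; simp
        · have : ∃ j, i j ≠ k := by
            by_contra hco; push_neg at hco; exact hi (funext hco)
          obtain ⟨j, hj⟩ := this
          rw [if_neg hi]
          exact Finset.prod_eq_zero (Finset.mem_univ j) (by simp [Pi.single_eq_of_ne hj])
      have hval := hpd _ hx
      unfold tApply at hval
      simp only [hprod, mul_ite, mul_one, mul_zero, Finset.sum_ite_eq' Finset.univ,
        Finset.mem_univ, if_true] at hval
      have : cauchyHankel m n g h (fun _ => k)
          = 1 / (g + h * ((m:ℝ) * (((k:ℕ):ℝ) + 1))) := by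
        simp [cauchyHankel, Finset.sum_const, Finset.card_univ, nsmul_eq_mul]
        exact Or.inl (by ring)
      rw [this] at hval
      exact one_div_pos.mp hval
    constructor
    · have := key ⟨0, by omega⟩
      simp at this
      linarith [this]
    · have := key ⟨n - 1, by omega⟩
      have hcast : (((n - 1 : ℕ):ℝ) + 1) = (n:ℝ) := by
        have : (1:ℕ) ≤ n := hn
        push_cast [Nat.cast_sub this]
        ring
      rw [hcast] at this
      -- this : 0 < g + h * (m * n)
      nlinarith [this]
  · -- inequalities → PD
    rintro ⟨h1, h2⟩ x hx
    set c : Fin n → ℝ := fun k => g / m + h * (((k:ℕ):ℝ) + 1) with hc_def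
    have hc : ∀ k, 0 < c k := by
      intro k
      have hk1 : (1:ℝ) ≤ ((k:ℕ):ℝ) + 1 := by
        have : (0:ℝ) ≤ ((k:ℕ):ℝ) := Nat.cast_nonneg _
        linarith
      have hk2 : ((k:ℕ):ℝ) + 1 ≤ (n:ℝ) := by
        have := k.isLt
        have : ((k:ℕ):ℝ) + 1 ≤ (n:ℝ) := by exact_mod_cast Nat.succ_le_of_lt this
        exact this
      have hnum : 0 < g + (m:ℝ) * (h * (((k:ℕ):ℝ) + 1)) := by
        rcases le_or_gt 0 h with hh0 | hh0
        · nlinarith [mul_nonneg (mul_nonneg hmR.le hh0) (by linarith : (0:ℝ) ≤ ((k:ℕ):ℝ) + 1 - 1)]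
        · nlinarith [mul_nonneg (mul_nonneg hmR.le (by linarith : (0:ℝ) ≤ -h))
            (by linarith : (0:ℝ) ≤ (n:ℝ) - (((k:ℕ):ℝ) + 1))]
      have hck : c k = (g + (m:ℝ) * (h * (((k:ℕ):ℝ) + 1))) / m := by
        simp only [hc_def]
        field_simp
      rw [hck]
      positivity
    set D : (Fin m → Fin n) → ℝ := fun i => g + h * ∑ j, (((i j : ℕ):ℝ) + 1) with hD_def
    have hD : ∀ i, D i = ∑ j : Fin m, c (i j) := by
      intro i
      simp only [hD_def, hc_def, Finset.sum_add_distrib, Finset.sum_const, Finset.card_univ,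
        Fintype.card_fin, nsmul_eq_mul, Finset.mul_sum, mul_add, mul_one]
      field_simp
    have hDpos : ∀ i, 0 < D i := by
      intro i
      rw [hD i]
      exact Finset.sum_pos (fun j _ => hc _) Finset.univ_nonempty
    set f : ℝ → ℝ := fun t => ∑ k, x k * t ^ (c k - 1 / m) with hf_def
    have hEq : ∀ t ∈ Set.Ioc (0:ℝ) 1,
        (∑ i : Fin m → Fin n, (∏ j, x (i j)) * t ^ (D i - 1)) = f t ^ m := by
      intro t ht
      rw [hf_def, Fintype.sum_pow]
      refine Finset.sum_congr rfl fun i _ => ?_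
      rw [Finset.prod_mul_distrib]
      congr 1
      rw [← Real.rpow_sum_of_pos ht.1]
      congr 1
      rw [Finset.sum_sub_distrib, Finset.sum_const, Finset.card_univ, Fintype.card_fin,
        nsmul_eq_mul, ← hD i]
      field_simp
    have hIntI : ∀ i : Fin m → Fin n,
        IntervalIntegrable (fun t => t ^ (D i - 1)) MeasureTheory.volume 0 1 :=
      fun i => intervalIntegral.intervalIntegrable_rpow' (by linarith [hDpos i])
    have hmain : tApply m n (cauchyHankel m n g h) x
        = ∫ t in Set.Ioc (0:ℝ) 1, f t ^ m := by
      have step1 : tApply m n (cauchyHankel m n g h) x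
          = ∑ i : Fin m → Fin n, ∫ t in (0:ℝ)..1, (∏ j, x (i j)) * t ^ (D i - 1) := by
        unfold tApply
        refine Finset.sum_congr rfl fun i _ => ?_
        rw [intervalIntegral.integral_const_mul,
          integral_rpow (Or.inl (by linarith [hDpos i] : (-1:ℝ) < D i - 1))]
        have hDne : D i - 1 + 1 ≠ 0 := by
          have := hDpos i; intro hcon; nlinarith
        rw [Real.one_rpow, Real.zero_rpow hDne]
        have : cauchyHankel m n g h i = 1 / D i := rfl
        rw [this]
        have : D i - 1 + 1 = D i := by ring
        rw [this]
        ring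
      rw [step1]
      have step2 : ∀ i : Fin m → Fin n,
          (∫ t in (0:ℝ)..1, (∏ j, x (i j)) * t ^ (D i - 1))
            = ∫ t in Set.Ioc (0:ℝ) 1, (∏ j, x (i j)) * t ^ (D i - 1) := fun i =>
        intervalIntegral.integral_of_le zero_le_one
      simp only [step2]
      rw [← MeasureTheory.integral_finset_sum]
      · exact MeasureTheory.setIntegral_congr_fun measurableSet_Ioc hEq
      · intro i _
        exact ((hIntI i).1).const_mul _
    have hft : ∃ t0 ∈ Set.Ioo (0:ℝ) 1, f t0 ≠ 0 := by
      by_contra hcon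
      push_neg at hcon
      set P : Polynomial ℝ := ∑ k : Fin n, Polynomial.monomial (k:ℕ) (x k) with hP
      have hroots : ∀ t ∈ Set.Ioo (0:ℝ) 1, P.IsRoot (t ^ h) := by
        intro t ht
        have htpos := ht.1
        have heval : P.eval (t ^ h) = ∑ k : Fin n, x k * (t ^ h) ^ (k:ℕ) := by
          simp [hP, Polynomial.eval_finset_sum]
        have hsplit : ∀ k : Fin n,
            t ^ (c k - 1 / m) = t ^ (g / m + h - 1 / m) * (t ^ h) ^ (k:ℕ) := by
          intro k
          rw [← Real.rpow_natCast (t ^ h) (k:ℕ), ← Real.rpow_mul htpos.le,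
            ← Real.rpow_add htpos]
          congr 1
          simp only [hc_def]
          ring
        have hfactor : f t = t ^ (g / m + h - 1 / m) * P.eval (t ^ h) := by
          rw [heval, Finset.mul_sum, hf_def]
          refine Finset.sum_congr rfl fun k _ => ?_
          rw [hsplit k]; ring
        have h0 := hcon t ht
        rw [hfactor] at h0
        have hne : t ^ (g / m + h - 1 / m) ≠ 0 :=
          (Real.rpow_pos_of_pos htpos _).ne'
        exact (mul_eq_zero.mp h0).resolve_left hne
      have hinj : Set.InjOn (fun t : ℝ => t ^ h) (Set.Ioo 0 1) := by
        intro t1 ht1 t2 ht2 heq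
        have e1 : (t1 ^ h) ^ (1 / h) = t1 := by
          rw [← Real.rpow_mul ht1.1.le, mul_one_div_cancel hh, Real.rpow_one]
        have e2 : (t2 ^ h) ^ (1 / h) = t2 := by
          rw [← Real.rpow_mul ht2.1.le, mul_one_div_cancel hh, Real.rpow_one]
        rw [← e1, ← e2]
        simp only at heq
        rw [heq]
      have hinf : {u : ℝ | P.IsRoot u}.Infinite := by
        apply Set.Infinite.mono ?_
          (((Set.Ioo_infinite (by norm_num : (0:ℝ) < 1))).image hinj)
        rintro u ⟨t, ht, rfl⟩
        exact hroots t ht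
      have hP0 : P = 0 := Polynomial.eq_zero_of_infinite_isRoot P hinf
      apply hx
      funext k
      have hcoeff : P.coeff (k:ℕ) = x k := by
        rw [hP, Polynomial.finset_sum_coeff]
        rw [Finset.sum_eq_single k]
        · simp [Polynomial.coeff_monomial]
        · intro b _ hbk
          rw [Polynomial.coeff_monomial, if_neg (fun hc' => hbk (Fin.val_injective hc'))]
        · intro hk; exact absurd (Finset.mem_univ k) hk
      have : P.coeff (k:ℕ) = 0 := by rw [hP0]; simp
      rw [hcoeff] at this
      exact this
    obtain ⟨t0, ht0, hft0⟩ := hft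
    have hcont : ContinuousAt f t0 := by
      rw [hf_def]
      exact tendsto_finset_sum _ fun k _ => continuousAt_const.mul
        (Real.continuousAt_rpow_const t0 _ (Or.inl ht0.1.ne'))
    have hne : {t : ℝ | f t ≠ 0} ∈ nhds t0 :=
      hcont.preimage_mem_nhds (compl_singleton_mem_nhds hft0)
    have hmem : {t : ℝ | f t ≠ 0} ∩ Set.Ioo 0 1 ∈ nhds t0 :=
      Filter.inter_mem hne (isOpen_Ioo.mem_nhds ht0)
    have hposm : 0 < MeasureTheory.volume ({t : ℝ | f t ≠ 0} ∩ Set.Ioo 0 1) :=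
      MeasureTheory.Measure.measure_pos_of_mem_nhds _ hmem
    rw [hmain]
    rw [MeasureTheory.setIntegral_pos_iff_support_of_nonneg_ae
      (MeasureTheory.ae_of_all _ (fun t => hme.pow_nonneg (f t)))
      ?_]
    · refine hposm.trans_le (MeasureTheory.measure_mono ?_)
      rintro t ⟨ht1, ht2⟩
      refine ⟨?_, Set.Ioo_subset_Ioc_self ht2⟩
      simp only [Function.mem_support]
      exact pow_ne_zero m ht1
    · apply MeasureTheory.IntegrableOn.congr_fun ?_ hEq measurableSet_Ioc
      apply MeasureTheory.integrable_finset_sum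
      intro i _
      exact ((hIntI i).1).const_mul _
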